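/- Let f : ℕ → ℕ be strictly increasing with ∑_{n≥1} 1/f(n) < ∞, let (a_n) be positive integers with ∑_{n≥1} 1/a_n < ∞, and let E(f,a) := {α ∈ (0,1) : s_{f(i)+1}(α) ≤ (f(i)+1)/a_i for all i ≥ 1}, where s_j(α) are the factoradic digits of α. Then for each α ∈ E(f,a) there exists C > 0 such that |∑_{n ≤ N} e^{2πi (n + f(n)!) α}| ≤ C for all N ∈ ℕ. -/

import Mathlib

noncomputable def e (x : ℝ) : ℂ := Complex.exp (2 * Real.pi * Complex.I * x)

lemma e_norm (x : ℝ) : ‖e x‖ = 1 := by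
  simp [e, Complex.norm_exp]

lemma e_add (x y : ℝ) : e (x + y) = e x * e y := by
  push_cast [e, ← Complex.exp_add]; ring_nf

lemma e_nat_mul (n : ℕ) (x : ℝ) : e (n * x) = (e x) ^ n := by
  rw [e, e, ← Complex.exp_nat_mul]; push_cast; ring_nf

lemma e_int (k : ℤ) : e k = 1 := by
  have := Complex.exp_int_mul_two_pi_mul_I k
  rw [e, ← this]; push_cast; ring_nf

lemma e_fract (x : ℝ) : e x = e (Int.fract x) := by
  conv_lhs => rw [← Int.floor_add_fract x]
  rw [e_add, e_int, one_mul]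

lemma e_sub_one {x : ℝ} (hx : 0 ≤ x) : ‖e x - 1‖ ≤ 4 * Real.pi * x := by
  have hpi := Real.pi_pos
  by_cases h : 2 * Real.pi * x ≤ 1
  · have habs : ‖(2 * Real.pi * Complex.I * x : ℂ)‖ = 2 * Real.pi * x := by
      simp [abs_of_nonneg hx, abs_of_nonneg Real.pi_nonneg]
    have := Complex.norm_exp_sub_one_le (x := 2 * Real.pi * Complex.I * x) (by rw [habs]; exact h)
    rw [e]
    calc ‖Complex.exp (2 * Real.pi * Complex.I * x) - 1‖ ≤ 2 * ‖(2 * Real.pi * Complex.I * x : ℂ)‖ := this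
      _ = 4 * Real.pi * x := by rw [habs]; ring
  · push_neg at h
    calc ‖e x - 1‖ ≤ ‖e x‖ + ‖(1:ℂ)‖ := norm_sub_le _ _
      _ = 2 := by rw [e_norm]; norm_num
      _ ≤ 4 * Real.pi * x := by nlinarith

lemma e_ne_one {α : ℝ} (hα : α ∈ Set.Ioo (0:ℝ) 1) : e α ≠ 1 := by
  intro h
  rw [e, Complex.exp_eq_one_iff] at h
  obtain ⟨n, hn⟩ := h
  have hpi : (Real.pi : ℂ) ≠ 0 := by exact_mod_cast Real.pi_ne_zero
  have h2' : (2 * (Real.pi:ℂ) * Complex.I) ≠ 0 :=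
    mul_ne_zero (mul_ne_zero two_ne_zero hpi) Complex.I_ne_zero
  have hα' : (α : ℂ) = (n : ℂ) := by
    apply mul_left_cancel₀ h2'
    rw [hn]; ring
  have : α = (n : ℝ) := by exact_mod_cast hα'
  obtain ⟨h0, h1⟩ := hα
  rw [this] at h0 h1
  have : (0:ℤ) < n := by exact_mod_cast h0
  have : (n:ℤ) < 1 := by exact_mod_cast h1
  omega

lemma fact_pow (m j : ℕ) : (m+1).factorial * 2^j ≤ (j+m+1).factorial := by
  induction j with
  | zero => simp
  | succ j ih =>
    have : (j+1+m+1).factorial = (j+m+2) * (j+m+1).factorial := by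
      have : j+1+m+1 = (j+m+1)+1 := by ring
      rw [this, Nat.factorial_succ]
    rw [this, pow_succ]
    calc (m+1).factorial * (2^j * 2) = 2 * ((m+1).factorial * 2^j) := by ring
      _ ≤ 2 * (j+m+1).factorial := by omega
      _ ≤ (j+m+2) * (j+m+1).factorial := by
          exact Nat.mul_le_mul_right _ (by omega)

lemma fract_bound (α : ℝ) (s : ℕ → ℕ) (hdig : ∀ i : ℕ, 1 ≤ i → s i ≤ i - 1)
    (hrep : α = ∑' n : ℕ, (s (n + 1) : ℝ) / (Nat.factorial (n + 1))) (m : ℕ) :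
    Int.fract ((Nat.factorial m : ℝ) * α) ≤ (s (m+1) : ℝ)/(m+1) + 2/(m+1) := by
  set F : ℕ → ℝ := fun n => (s (n + 1) : ℝ) / (Nat.factorial (n + 1)) with hF
  have hFnonneg : ∀ n, 0 ≤ F n := fun n => by positivity
  have hFle : ∀ n, F n ≤ 1 / (Nat.factorial n) := by
    intro n
    have h1 : (s (n+1) : ℝ) ≤ (n+1 : ℝ) := by
      have := hdig (n+1) (by omega)
      have : s (n+1) ≤ n := by omega
      exact_mod_cast this.trans (by omega)
    have h2 : ((Nat.factorial (n+1) : ℝ)) = (n+1) * Nat.factorial n := by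
      rw [Nat.factorial_succ]; push_cast; ring
    simp only [hF]
    rw [h2, div_le_div_iff₀ (by positivity) (by positivity)]
    have hn : (0:ℝ) < Nat.factorial n := by positivity
    nlinarith [hn]
  have hFsum : Summable F := by
    apply Summable.of_nonneg_of_le hFnonneg hFle
    simpa using Real.summable_pow_div_factorial 1
  set G : ℕ → ℝ := fun n => (Nat.factorial m : ℝ) * F n with hG
  have hGsum : Summable G := hFsum.mul_left _
  have hGnonneg : ∀ n, 0 ≤ G n := fun n => mul_nonneg (by positivity) (hFnonneg n)
  have hαG : (Nat.factorial m : ℝ) * α = ∑' n, G n := by rw [hrep, ← tsum_mul_left]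
  have hsplit := hGsum.sum_add_tsum_nat_add m
  set T : ℝ := ∑' n, G (n + m) with hT
  have hTnonneg : 0 ≤ T := tsum_nonneg (fun n => hGnonneg _)
  set N₀ : ℕ := ∑ k ∈ Finset.range m, s (k+1) * (Nat.factorial m / Nat.factorial (k+1)) with hN₀
  have hcast : (N₀ : ℝ) = ∑ k ∈ Finset.range m, G k := by
    rw [hN₀, Nat.cast_sum]
    apply Finset.sum_congr rfl
    intro k hk
    have hkm : k + 1 ≤ m := Finset.mem_range.mp hk
    have hdvd : Nat.factorial (k+1) ∣ Nat.factorial m := Nat.factorial_dvd_factorial hkm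
    have hne : ((Nat.factorial (k+1) : ℝ)) ≠ 0 := by positivity
    rw [Nat.cast_mul, Nat.cast_div hdvd hne]
    simp only [hG, hF]
    ring
  have hma : (Nat.factorial m : ℝ) * α = (N₀ : ℝ) + T := by
    rw [hαG, ← hsplit, hcast]
  have hfr : Int.fract ((Nat.factorial m : ℝ) * α) = Int.fract T := by
    rw [hma, Int.fract_natCast_add]
  have hfrle : Int.fract ((Nat.factorial m : ℝ) * α) ≤ T := by
    rw [hfr]
    have h1 : (0:ℝ) ≤ (⌊T⌋ : ℝ) := by exact_mod_cast Int.floor_nonneg.mpr hTnonneg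
    have : Int.fract T = T - ⌊T⌋ := rfl
    linarith
  -- now bound T
  have hHsum : Summable (fun n => G (n + m)) := by
    exact (summable_nat_add_iff m).mpr hGsum
  have hsplit2 := hHsum.sum_add_tsum_nat_add 1
  simp only [Finset.range_one, Finset.sum_singleton] at hsplit2
  have hGm : G (0 + m) = (s (m+1) : ℝ) / (m+1) := by
    simp only [hG, hF, zero_add]
    rw [Nat.factorial_succ]
    push_cast
    have h0 : (0:ℝ) < (Nat.factorial m : ℝ) := by positivity
    field_simp
  have htail : (∑' n, G (n + 1 + m)) ≤ 2/(m+1) := by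
    have hbound : ∀ n : ℕ, G (n + 1 + m) ≤ (1/(m+1) : ℝ) * (1/2)^n := by
      intro n
      have hs : (s (n+1+m+1) : ℝ) ≤ (n+m+2 : ℝ) := by
        have := hdig (n+1+m+1) (by omega)
        have h2 : s (n+1+m+1) ≤ n+m+2 := by omega
        calc (s (n+1+m+1) : ℝ) ≤ ((n+m+2 : ℕ) : ℝ) := by exact_mod_cast h2
          _ = (n+m+2 : ℝ) := by push_cast; ring
      have hfac : ((Nat.factorial (n+1+m+1) : ℝ)) = (n+m+2 : ℝ) * (Nat.factorial (n+m+1) : ℝ) := by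
        have : n+1+m+1 = (n+m+1)+1 := by ring
        rw [this, Nat.factorial_succ]
        push_cast; ring
      have hkey : ((Nat.factorial m : ℝ)) * ((m:ℝ)+1) * 2^n ≤ (Nat.factorial (n+m+1) : ℝ) := by
        have := fact_pow m n
        have h2 : ((Nat.factorial (m+1) * 2^n : ℕ) : ℝ) ≤ ((Nat.factorial (n+m+1) : ℕ) : ℝ) := by
          exact_mod_cast this
        rw [Nat.cast_mul, Nat.factorial_succ, Nat.cast_mul] at h2
        push_cast at h2 ⊢
        nlinarith [h2]
      have step1 : G (n + 1 + m) ≤ (Nat.factorial m : ℝ) / (Nat.factorial (n+m+1) : ℝ) := by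
        simp only [hG, hF]
        rw [hfac]
        have hp1 : (0:ℝ) < (n+m+2 : ℝ) := by positivity
        have hp2 : (0:ℝ) < (Nat.factorial (n+m+1) : ℝ) := by positivity
        have hq : ((Nat.factorial m : ℝ)) * ((s (n+1+m+1) : ℝ) / ((n+m+2 : ℝ) * (Nat.factorial (n+m+1) : ℝ)))
            = ((Nat.factorial m : ℝ) / (Nat.factorial (n+m+1) : ℝ)) * ((s (n+1+m+1) : ℝ) / (n+m+2 : ℝ)) := by
          field_simp
        rw [hq]
        have hle1 : (s (n+1+m+1) : ℝ) / (n+m+2 : ℝ) ≤ 1 := by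
          rw [div_le_one hp1]; exact hs
        have hnn : (0:ℝ) ≤ (Nat.factorial m : ℝ) / (Nat.factorial (n+m+1) : ℝ) := by positivity
        calc ((Nat.factorial m : ℝ) / (Nat.factorial (n+m+1) : ℝ)) * ((s (n+1+m+1) : ℝ) / (n+m+2 : ℝ))
            ≤ ((Nat.factorial m : ℝ) / (Nat.factorial (n+m+1) : ℝ)) * 1 :=
              mul_le_mul_of_nonneg_left hle1 hnn
          _ = _ := mul_one _
      have step2 : (Nat.factorial m : ℝ) / (Nat.factorial (n+m+1) : ℝ) ≤ (1/(m+1) : ℝ) * (1/2)^n := by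
        have hp2 : (0:ℝ) < (Nat.factorial (n+m+1) : ℝ) := by positivity
        have hden : (0:ℝ) < ((m:ℝ)+1) * 2^n := by positivity
        have hrhs : ((1/(m+1):ℝ)) * (1/2)^n = 1 / (((m:ℝ)+1) * 2^n) := by
          rw [div_pow, one_pow, div_mul_div_comm, one_mul]
        rw [hrhs, div_le_div_iff₀ hp2 hden, one_mul]
        nlinarith [hkey]
      exact step1.trans step2
    have hsumL : Summable (fun n => G (n + 1 + m)) := by
      apply Summable.congr ((summable_nat_add_iff (1 + m)).mpr hGsum)
      intro n; congr 1; omega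
    have hsumR : Summable (fun n : ℕ => (1/(m+1) : ℝ) * (1/2)^n) :=
      (summable_geometric_of_lt_one (by norm_num) (by norm_num)).mul_left _
    calc (∑' n, G (n + 1 + m)) ≤ ∑' n : ℕ, (1/(m+1) : ℝ) * (1/2)^n :=
          Summable.tsum_le_tsum hbound hsumL hsumR
      _ = (1/(m+1) : ℝ) * (1 - 1/2)⁻¹ := by
          rw [tsum_mul_left, tsum_geometric_of_lt_one (by norm_num) (by norm_num)]
      _ = 2/(m+1) := by norm_num; ring
  calc Int.fract ((Nat.factorial m : ℝ) * α) ≤ T := hfrle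
    _ = G (0 + m) + ∑' n, G (n + 1 + m) := by rw [hT, ← hsplit2]
    _ ≤ (s (m+1) : ℝ)/(m+1) + 2/(m+1) := add_le_add (le_of_eq hGm) htail


theorem stmt_15 (f : ℕ → ℕ) (hf : StrictMono f)
    (hfsum : Summable fun n : ℕ => (1 : ℝ) / (f n))
    (a : ℕ → ℕ) (ha : ∀ n, 0 < a n)
    (hasum : Summable fun n : ℕ => (1 : ℝ) / (a n))
    (α : ℝ) (hα : α ∈ Set.Ioo (0 : ℝ) 1)
    (s : ℕ → ℕ) (hdig : ∀ i : ℕ, 1 ≤ i → s i ≤ i - 1)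
    (hrep : α = ∑' n : ℕ, (s (n + 1) : ℝ) / (Nat.factorial (n + 1)))
    (hE : ∀ i : ℕ, 1 ≤ i → (s (f i + 1) : ℝ) ≤ ((f i : ℝ) + 1) / (a i)) :
    ∃ C > 0, ∀ N : ℕ,
      ‖∑ n ∈ Finset.Icc 1 N, e ((n + Nat.factorial (f n)) * α)‖ ≤ C := by
  have hpi := Real.pi_pos
  set z : ℂ := e α with hz
  have hz1 : z ≠ 1 := e_ne_one hα
  have hzn : ‖z‖ = 1 := e_norm α
  have hdpos : 0 < ‖z - 1‖ := by
    rw [norm_pos_iff]; exact sub_ne_zero.mpr hz1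
  set M : ℝ := 2 / ‖z - 1‖ with hM
  have hMpos : 0 < M := by positivity
  set G : ℕ → ℂ := fun N => ∑ n ∈ Finset.Icc 1 N, z ^ n with hG
  have hGb : ∀ N, ‖G N‖ ≤ M := by
    intro N
    have h1 : G N = z * ∑ i ∈ Finset.range N, z ^ i := by
      show (∑ n ∈ Finset.Icc 1 N, z ^ n) = _
      rw [Finset.mul_sum, ← Finset.Ico_add_one_right_eq_Icc, Finset.sum_Ico_eq_sum_range]
      apply Finset.sum_congr rfl
      intro i _
      ring
    have h2 : ‖(∑ i ∈ Finset.range N, z ^ i)‖ * ‖z - 1‖ ≤ 2 := by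
      rw [← norm_mul, geom_sum_mul]
      calc ‖z ^ N - 1‖ ≤ ‖z ^ N‖ + ‖(1:ℂ)‖ := norm_sub_le _ _
        _ = 2 := by rw [norm_pow, hzn]; norm_num
    rw [h1, norm_mul, hzn, one_mul, hM]
    rw [le_div_iff₀ hdpos]
    exact h2
  set b : ℕ → ℂ := fun n => e ((Nat.factorial (f n) : ℝ) * α) with hb
  have hbn : ∀ n, ‖b n‖ = 1 := fun n => e_norm _
  set u : ℕ → ℝ := fun n => ‖b (n+1) - b n‖ with hu
  have hunn : ∀ n, 0 ≤ u n := fun n => norm_nonneg _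
  have hterm : ∀ n : ℕ, e ((n + Nat.factorial (f n)) * α) = z ^ n * b n := by
    intro n
    have h1 : ((n : ℝ) + (Nat.factorial (f n) : ℝ)) * α
        = (n : ℝ) * α + (Nat.factorial (f n) : ℝ) * α := by ring
    rw [h1, e_add, e_nat_mul]
  set φ : ℕ → ℝ := fun n => 1 / (a n) + 2 / ((f n : ℝ) + 1) with hφ
  have hφnn : ∀ n, 0 ≤ φ n := by intro n; positivity
  have hφsum : Summable φ := by
    apply Summable.add hasum
    rw [← summable_nat_add_iff 1]
    refine Summable.of_nonneg_of_le (fun n => by positivity) (fun n => ?_)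
      (((summable_nat_add_iff 1).mpr hfsum).mul_left 2)
    · have hfn : 1 ≤ f (n+1) := Nat.one_le_iff_ne_zero.mpr (by
        have : n+1 ≤ f (n+1) := hf.le_apply; omega)
      have h0 : (0:ℝ) < (f (n+1) : ℝ) := by exact_mod_cast hfn
      rw [mul_one_div]
      apply div_le_div_of_nonneg_left (by norm_num) h0
      linarith
  have hubd : ∀ n : ℕ, 1 ≤ n → ‖b n - 1‖ ≤ 4 * Real.pi * φ n := by
    intro n hn
    have hfr := fract_bound α s hdig hrep (f n)
    have hfrφ : Int.fract ((Nat.factorial (f n) : ℝ) * α) ≤ φ n := by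
      have hEn := hE n hn
      have han : (0:ℝ) < a n := by exact_mod_cast ha n
      have hs1 : (s (f n + 1) : ℝ) / ((f n : ℝ) + 1) ≤ 1 / a n := by
        rw [div_le_div_iff₀ (by positivity) han]
        calc (s (f n + 1) : ℝ) * a n ≤ (((f n : ℝ) + 1) / a n) * a n := by nlinarith
          _ = ((f n : ℝ) + 1) := by field_simp
          _ = 1 * ((f n : ℝ) + 1) := (one_mul _).symm
      calc Int.fract ((Nat.factorial (f n) : ℝ) * α)
          ≤ (s (f n + 1) : ℝ) / ((f n : ℝ) + 1) + 2 / ((f n : ℝ) + 1) := by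
            have := hfr; push_cast at this ⊢; linarith
        _ ≤ 1 / a n + 2 / ((f n : ℝ) + 1) := by linarith
        _ = φ n := rfl
    have hbfr : b n = e (Int.fract ((Nat.factorial (f n) : ℝ) * α)) := by
      rw [hb]; exact e_fract _
    rw [hbfr]
    calc ‖e (Int.fract ((Nat.factorial (f n) : ℝ) * α)) - 1‖
        ≤ 4 * Real.pi * Int.fract ((Nat.factorial (f n) : ℝ) * α) :=
          e_sub_one (Int.fract_nonneg _)
      _ ≤ 4 * Real.pi * φ n := by nlinarith
  set v : ℕ → ℝ := fun n => if n = 0 then 2 else 4 * Real.pi * (φ (n+1) + φ n) with hv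
  have hvnn : ∀ n, 0 ≤ v n := by
    intro n
    rw [hv]
    by_cases h : n = 0 <;> simp [h]
    · positivity
  have huv : ∀ n, u n ≤ v n := by
    intro n
    rcases Nat.eq_zero_or_pos n with h0 | h1
    · subst h0
      rw [hv]; simp only [if_pos rfl]
      calc u 0 ≤ ‖b 1‖ + ‖b 0‖ := norm_sub_le _ _
        _ = 2 := by rw [hbn, hbn]; norm_num
    · rw [hv]; simp only [if_neg (Nat.pos_iff_ne_zero.mp h1)]
      calc u n = ‖(b (n+1) - 1) - (b n - 1)‖ := by rw [hu]; ring_nf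
        _ ≤ ‖b (n+1) - 1‖ + ‖b n - 1‖ := norm_sub_le _ _
        _ ≤ 4 * Real.pi * φ (n+1) + 4 * Real.pi * φ n :=
            add_le_add (hubd (n+1) (by omega)) (hubd n h1)
        _ = 4 * Real.pi * (φ (n+1) + φ n) := by ring
  have hvsum : Summable v := by
    rw [← summable_nat_add_iff 1]
    have : (fun n => v (n+1)) = fun n => 4 * Real.pi * (φ (n+2) + φ (n+1)) := by
      funext n; rw [hv]; simp
    rw [this]
    exact (((summable_nat_add_iff 2).mpr hφsum).add ((summable_nat_add_iff 1).mpr hφsum)).mul_left _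
  set K : ℝ := ∑' n, v n with hK
  have hKnn : 0 ≤ K := tsum_nonneg hvnn
  have husum : ∀ N, ∑ n ∈ Finset.range N, u n ≤ K := by
    intro N
    calc ∑ n ∈ Finset.range N, u n ≤ ∑ n ∈ Finset.range N, v n :=
        Finset.sum_le_sum (fun i _ => huv i)
      _ ≤ K := Summable.sum_le_tsum _ (fun i _ => hvnn i) hvsum
  have key : ∀ N, ‖(∑ n ∈ Finset.Icc 1 N, e ((n + Nat.factorial (f n)) * α)) - G N * b N‖
      ≤ M * ∑ n ∈ Finset.range N, u n := by
    intro N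
    induction N with
    | zero => simp [hG]
    | succ N ih =>
      have hS : (∑ n ∈ Finset.Icc 1 (N+1), e ((n + Nat.factorial (f n)) * α))
          = (∑ n ∈ Finset.Icc 1 N, e ((n + Nat.factorial (f n)) * α)) + z ^ (N+1) * b (N+1) := by
        rw [Finset.sum_Icc_succ_top (by omega)]
        rw [hterm]
      have hGs : G (N+1) = G N + z ^ (N+1) := by
        rw [hG]; exact Finset.sum_Icc_succ_top (by omega) _
      have halg : (∑ n ∈ Finset.Icc 1 (N+1), e ((n + Nat.factorial (f n)) * α)) - G (N+1) * b (N+1)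
          = ((∑ n ∈ Finset.Icc 1 N, e ((n + Nat.factorial (f n)) * α)) - G N * b N)
            + G N * (b N - b (N+1)) := by
        rw [hS, hGs]; ring
      rw [halg, Finset.sum_range_succ, mul_add]
      calc ‖_ + G N * (b N - b (N+1))‖
          ≤ ‖(∑ n ∈ Finset.Icc 1 N, e ((n + Nat.factorial (f n)) * α)) - G N * b N‖
            + ‖G N * (b N - b (N+1))‖ := norm_add_le _ _
        _ ≤ M * ∑ n ∈ Finset.range N, u n + M * u N := by
            apply add_le_add ih
            rw [norm_mul]
            have h1 : ‖b N - b (N+1)‖ = u N := by rw [hu]; exact norm_sub_rev _ _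
            rw [h1]
            exact mul_le_mul_of_nonneg_right (hGb N) (hunn N)
  refine ⟨M * K + M + 1, by nlinarith, fun N => ?_⟩
  calc ‖∑ n ∈ Finset.Icc 1 N, e ((n + Nat.factorial (f n)) * α)‖
      ≤ ‖(∑ n ∈ Finset.Icc 1 N, e ((n + Nat.factorial (f n)) * α)) - G N * b N‖
        + ‖G N * b N‖ := by
          have := norm_sub_le ((∑ n ∈ Finset.Icc 1 N, e ((n + Nat.factorial (f n)) * α)) - G N * b N) (-(G N * b N))
          simpa [sub_neg_eq_add, norm_neg] using norm_add_le ((∑ n ∈ Finset.Icc 1 N, e ((n + Nat.factorial (f n)) * α)) - G N * b N) (G N * b N)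
    _ ≤ M * ∑ n ∈ Finset.range N, u n + M * 1 := by
        apply add_le_add (key N)
        rw [norm_mul, hbn, mul_one]
        simpa using hGb N
    _ ≤ M * K + M + 1 := by
        have := husum N
        nlinarith
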